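/- Let x ∈ ℓ∞ have exactly n accumulation points with representation x ∼_{c₀} ξ₁·1_{S₁}+⋯+ξₙ·1_{Sₙ} and y ∈ ℓ∞ have exactly k accumulation points with representation y ∼_{c₀} η₁·1_{T₁}+⋯+η_k·1_{T_k}. Let ℰ = {(i,j) : S_i ∩ T_j is infinite} and suppose the points {(ξ_i, η_j) : (i,j) ∈ ℰ} ⊆ ℝ² are not collinear. Then there exists z in the span of {x, y} whose number of accumulation points satisfies ⌊(|ℰ|+1)/2⌋ ≤ |L_z| ≤ |ℰ| − 1. -/

import Mathlib

open Filter Topology Set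

/-- The set of accumulation points of a real sequence. -/
def AccPts (x : ℕ → ℝ) : Set ℝ := {η | ∀ ε > 0, {n : ℕ | |x n - η| < ε}.Infinite}


lemma abstract_count {α : Type*} [DecidableEq α] (Q : Finset α) (f g h : α → ℝ)
    (hQne : Q.Nonempty)
    (hginj : ∀ p ∈ Q, ∀ q ∈ Q, g p = g q → p = q)
    (hc : ∀ p ∈ Q, ∀ q ∈ Q, p ≠ q → h p = h q → f p ≠ f q)
    (hd : ∀ p ∈ Q, ∀ q ∈ Q, f p < f q → g p < g q)
    (he : ∀ p ∈ Q, ∀ q ∈ Q, h p < h q → g p < g q) :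
    Q.card + 1 ≤ (Q.image h).card + (Q.image f).card := by
  classical
  set M : Finset α := Q.filter (fun p => ∀ q ∈ Q, h q = h p → g q ≤ g p) with hM
  set N : Finset α := Q.filter (fun p => ¬ ∀ q ∈ Q, h q = h p → g q ≤ g p) with hN
  have hMN : M.card + N.card = Q.card := Finset.card_filter_add_card_filter_not _
  -- (Q.image h).card = M.card
  have hMim : M.image h = Q.image h := by
    apply Finset.Subset.antisymm
    · exact Finset.image_subset_image (Finset.filter_subset _ _)
    · intro v hv
      obtain ⟨p0, hp0, hp0v⟩ := Finset.mem_image.mp hv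
      have hfib : (Q.filter (fun r => h r = v)).Nonempty :=
        ⟨p0, Finset.mem_filter.mpr ⟨hp0, hp0v⟩⟩
      obtain ⟨p, hp, hpmax⟩ := Finset.exists_max_image _ g hfib
      have hpQ : p ∈ Q := (Finset.mem_filter.mp hp).1
      have hpv : h p = v := (Finset.mem_filter.mp hp).2
      refine Finset.mem_image.mpr ⟨p, ?_, hpv⟩
      refine Finset.mem_filter.mpr ⟨hpQ, ?_⟩
      intro q hq hqp
      exact hpmax q (Finset.mem_filter.mpr ⟨hq, by rw [hqp, hpv]⟩)
  have hMinj : ∀ p ∈ M, ∀ q ∈ M, h p = h q → p = q := by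
    intro p hp q hq hpq
    have hpQ : p ∈ Q := (Finset.mem_filter.mp hp).1
    have hqQ : q ∈ Q := (Finset.mem_filter.mp hq).1
    have h1 := (Finset.mem_filter.mp hp).2 q hqQ hpq.symm
    have h2 := (Finset.mem_filter.mp hq).2 p hpQ hpq
    exact hginj p hpQ q hqQ (le_antisymm h2 h1)
  have hMcard : M.card = (Q.image h).card := by
    rw [← hMim, Finset.card_image_of_injOn]
    intro p hp q hq hpq
    exact hMinj p hp q hq hpq
  -- the key injection for N
  have hNkey : ∀ p ∈ N, f p ∈ (Q.image f) ∧ (∃ q ∈ Q, f p < f q) ∧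
      (∀ r ∈ Q, f r = f p → g r ≤ g p) := by
    intro p hpN
    have hpQ : p ∈ Q := (Finset.mem_filter.mp hpN).1
    have hpn := (Finset.mem_filter.mp hpN).2
    push_neg at hpn
    obtain ⟨q0, hq0Q, hq0h, hq0g⟩ := hpn
    have hFne : (Q.filter (fun r => h r = h p ∧ g p < g r)).Nonempty :=
      ⟨q0, Finset.mem_filter.mpr ⟨hq0Q, hq0h, hq0g⟩⟩
    obtain ⟨q, hq, hqmin⟩ := Finset.exists_min_image _ g hFne
    have hqQ : q ∈ Q := (Finset.mem_filter.mp hq).1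
    have hqh : h q = h p := (Finset.mem_filter.mp hq).2.1
    have hqg : g p < g q := (Finset.mem_filter.mp hq).2.2
    have hpqne : p ≠ q := fun e => absurd (e ▸ hqg) (lt_irrefl _)
    have hfne : f p ≠ f q := hc p hpQ q hqQ hpqne hqh.symm
    have hflt : f p < f q := by
      rcases hfne.lt_or_gt with h1 | h1
      · exact h1
      · exact absurd (hd q hqQ p hpQ h1) (not_lt.mpr hqg.le)
    -- no point strictly g-between p and q
    have hbetween : ∀ r ∈ Q, ¬ (g p < g r ∧ g r < g q) := by
      intro r hr ⟨h1, h2⟩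
      by_cases hh : h r = h p
      · have : q ∈ Q.filter (fun r => h r = h p ∧ g p < g r) := hq
        have hrF : r ∈ Q.filter (fun r' => h r' = h p ∧ g p < g r') :=
          Finset.mem_filter.mpr ⟨hr, hh, h1⟩
        exact absurd (hqmin r hrF) (not_le.mpr h2)
      · have hhr : ¬ h r < h p := fun hlt =>
          absurd (he r hr p hpQ hlt) (not_lt.mpr h1.le)
        have hhp : h p < h r := lt_of_le_of_ne (not_lt.mp hhr) (Ne.symm hh)
        have : h q < h r := hqh.symm ▸ hhp
        exact absurd (he q hqQ r hr this) (not_lt.mpr h2.le)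
    refine ⟨Finset.mem_image_of_mem f hpQ, ⟨q, hqQ, hflt⟩, ?_⟩
    intro r hr hfr
    by_contra hgr
    have hgr' : g p < g r := lt_of_not_ge hgr
    have h3 : ¬ g r < g q := fun hlt => hbetween r hr ⟨hgr', hlt⟩
    have hrq : r ≠ q := by
      intro e
      exact hfne (by rw [← hfr, e])
    have h4 : g q < g r := by
      rcases lt_trichotomy (g r) (g q) with h' | h' | h'
      · exact absurd h' h3
      · exact absurd (hginj r hr q hqQ h') hrq
      · exact h'
    have : f q ≤ f r := by
      by_contra h5
      exact absurd (hd r hr q hqQ (lt_of_not_ge h5)) (not_lt.mpr h4.le)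
    rw [hfr] at this
    exact absurd hflt (not_lt.mpr this)
  -- f is injective on N
  have hNinj : ∀ p ∈ N, ∀ q ∈ N, f p = f q → p = q := by
    intro p hp q hq hpq
    have hpQ : p ∈ Q := (Finset.mem_filter.mp hp).1
    have hqQ : q ∈ Q := (Finset.mem_filter.mp hq).1
    have h1 := (hNkey p hp).2.2 q hqQ hpq.symm
    have h2 := (hNkey q hq).2.2 p hpQ hpq
    exact hginj p hpQ q hqQ (le_antisymm h2 h1)
  have hQfne : (Q.image f).Nonempty := hQne.image f
  set vtop := (Q.image f).max' hQfne with hvtop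
  have hNsub : N.image f ⊆ (Q.image f).erase vtop := by
    intro v hv
    obtain ⟨p, hpN, hpv⟩ := Finset.mem_image.mp hv
    obtain ⟨hmem, ⟨q, hqQ, hflt⟩, _⟩ := hNkey p hpN
    refine Finset.mem_erase.mpr ⟨?_, hpv ▸ hmem⟩
    have : f q ≤ vtop := Finset.le_max' _ _ (Finset.mem_image_of_mem f hqQ)
    intro e
    rw [← hpv] at e
    rw [e] at hflt
    linarith
  have hNcard : N.card + 1 ≤ (Q.image f).card := by
    have h1 : N.card = (N.image f).card :=
      (Finset.card_image_of_injOn (fun p hp q hq => hNinj p hp q hq)).symm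
    have h2 : (N.image f).card ≤ ((Q.image f).erase vtop).card :=
      Finset.card_le_card hNsub
    have h3 : ((Q.image f).erase vtop).card = (Q.image f).card - 1 :=
      Finset.card_erase_of_mem (Finset.max'_mem _ _)
    have h4 : 1 ≤ (Q.image f).card := Finset.card_pos.mpr hQfne
    omega
  omega

theorem key_geom (P : Set (ℝ × ℝ)) (hfin : P.Finite)
    (hnc : ¬ ∃ a b c : ℝ, (a ≠ 0 ∨ b ≠ 0) ∧ ∀ p ∈ P, a * p.1 + b * p.2 = c) :
    ∃ a b : ℝ, (P.ncard + 1) / 2 ≤ ((fun q : ℝ × ℝ => a * q.1 + b * q.2) '' P).ncard ∧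
      ((fun q : ℝ × ℝ => a * q.1 + b * q.2) '' P).ncard ≤ P.ncard - 1 := by
  classical
  -- helper: ncard of images via the finset
  have himgcard : ∀ f : ℝ × ℝ → ℝ, (f '' P).ncard = (hfin.toFinset.image f).card := by
    intro f
    rw [← Set.ncard_coe_finset]
    congr 1
    rw [Finset.coe_image, Set.Finite.coe_toFinset]
  have hPcard : P.ncard = hfin.toFinset.card := by
    rw [← Set.ncard_coe_finset, Set.Finite.coe_toFinset]
  -- two distinct points
  have htwo : ∃ p ∈ P, ∃ q ∈ P, p ≠ q := by
    by_contra hno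
    push_neg at hno
    rcases Set.eq_empty_or_nonempty P with hPe | ⟨p0, hp0⟩
    · exact hnc ⟨1, 0, 0, Or.inl one_ne_zero, by simp [hPe]⟩
    · refine hnc ⟨1, 0, p0.1, Or.inl one_ne_zero, ?_⟩
      intro p hp
      rw [hno p hp p0 hp0]
      ring
  obtain ⟨pa, hpa, qa, hqa, hpqa⟩ := htwo
  -- the family of admissible value-counts
  set A : Set ℕ := {t | ∃ w : ℝ × ℝ, w ≠ 0 ∧
      (∃ p ∈ P, ∃ q ∈ P, p ≠ q ∧ w.1 * p.1 + w.2 * p.2 = w.1 * q.1 + w.2 * q.2) ∧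
      t = ((fun p : ℝ × ℝ => w.1 * p.1 + w.2 * p.2) '' P).ncard} with hA
  have hAne : A.Nonempty := by
    refine ⟨_, ⟨(qa.2 - pa.2, pa.1 - qa.1), ?_, ⟨pa, hpa, qa, hqa, hpqa, by ring⟩, rfl⟩⟩
    intro h0
    rw [Prod.ext_iff] at h0
    simp only [Prod.fst, Prod.snd] at h0
    apply hpqa
    have h1 : pa.1 = qa.1 := by have := h0.2; simp at this; linarith
    have h2 : pa.2 = qa.2 := by have := h0.1; simp at this; linarith
    exact Prod.ext h1 h2
  have hAbdd : BddAbove A := by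
    refine ⟨P.ncard, ?_⟩
    rintro t ⟨w, _, _, rfl⟩
    exact Set.ncard_image_le hfin
  set T : ℕ := sSup A with hT
  have hTA : T ∈ A := Nat.sSup_mem hAne hAbdd
  obtain ⟨w, hw0, ⟨pc, hpc, qc, hqc, hpqc, heqc⟩, hTcard⟩ := hTA
  -- T ≤ m - 1
  have hTle : T ≤ P.ncard - 1 := by
    have h1 : (fun p : ℝ × ℝ => w.1 * p.1 + w.2 * p.2) '' P =
        (fun p : ℝ × ℝ => w.1 * p.1 + w.2 * p.2) '' (P \ {qc}) := by
      apply Set.Subset.antisymm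
      · rintro v ⟨p, hp, rfl⟩
        by_cases hpq : p = qc
        · exact ⟨pc, ⟨hpc, by simp [hpqc]⟩, by subst hpq; simpa using heqc⟩
        · exact ⟨p, ⟨hp, by simp [hpq]⟩, rfl⟩
      · exact Set.image_mono (Set.diff_subset)
    have h2 : ((fun p : ℝ × ℝ => w.1 * p.1 + w.2 * p.2) '' (P \ {qc})).ncard ≤
        (P \ {qc}).ncard := Set.ncard_image_le (hfin.diff)
    have h3 : (P \ {qc}).ncard = P.ncard - 1 := Set.ncard_diff_singleton_of_mem hqc
    rw [hTcard, h1]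
    exact h2.trans_eq h3
  -- linear-algebra helpers
  obtain ⟨F, hFdef⟩ : ∃ F : ℝ × ℝ → ℝ, F = fun p => w.1 * p.1 + w.2 * p.2 := ⟨_, rfl⟩
  obtain ⟨K, hKdef⟩ : ∃ K : ℝ × ℝ → ℝ, K = fun p => -w.2 * p.1 + w.1 * p.2 := ⟨_, rfl⟩
  rw [← hFdef] at hTcard
  have heqcF : F pc = F qc := by rw [hFdef]; exact heqc
  have hw1 : w.1 ≠ 0 ∨ w.2 ≠ 0 := by
    by_contra hcon; push_neg at hcon
    exact hw0 (Prod.ext hcon.1 hcon.2)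
  have hwsq : 0 < w.1 ^ 2 + w.2 ^ 2 := by
    rcases hw1 with h | h
    · rcases h.lt_or_gt with hl | hl <;> nlinarith [sq_nonneg w.2]
    · rcases h.lt_or_gt with hl | hl <;> nlinarith [sq_nonneg w.1]
  have hΔ : ∀ p q : ℝ × ℝ, F p = F q → K p = K q → p = q := by
    intro p q h1 h2
    rw [hFdef] at h1
    rw [hKdef] at h2
    simp only at h1 h2
    have e1 : w.1 * (p.1 - q.1) + w.2 * (p.2 - q.2) = 0 := by linarith
    have e2 : -w.2 * (p.1 - q.1) + w.1 * (p.2 - q.2) = 0 := by linarith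
    have d1 : (w.1 ^ 2 + w.2 ^ 2) * (p.1 - q.1) = 0 := by linear_combination w.1 * e1 - w.2 * e2
    have d2 : (w.1 ^ 2 + w.2 ^ 2) * (p.2 - q.2) = 0 := by linear_combination w.2 * e1 + w.1 * e2
    have hx : p.1 = q.1 := by
      rcases mul_eq_zero.mp d1 with h | h
      · linarith
      · linarith
    have hy : p.2 = q.2 := by
      rcases mul_eq_zero.mp d2 with h | h
      · linarith
      · linarith
    exact Prod.ext hx hy
  -- critical parameters
  set Crit : Set ℝ := {c | ∃ p ∈ P, ∃ q ∈ P,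
      F p ≠ F q ∧ K p ≠ K q ∧ (F p - F q) + c * (K p - K q) = 0} with hCrit
  have hCritfin : Crit.Finite := by
    apply Set.Finite.subset ((hfin.prod hfin).image
      (fun pq : (ℝ × ℝ) × (ℝ × ℝ) => -(F pq.1 - F pq.2) / (K pq.1 - K pq.2)))
    rintro c ⟨p, hp, q, hq, hFne, hKne, heq⟩
    refine ⟨(p, q), ⟨hp, hq⟩, ?_⟩
    have hK0 : K p - K q ≠ 0 := sub_ne_zero.mpr hKne
    field_simp
    linarith
  have hCrit0 : (0 : ℝ) ∉ Crit := by
    rintro ⟨p, hp, q, hq, hFne, hKne, heq⟩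
    apply hFne
    have h0 : (F p - F q) + 0 * (K p - K q) = F p - F q := by ring
    rw [h0] at heq
    linarith
  have hCritne : Crit.Nonempty := by
    by_contra hemp
    rw [Set.not_nonempty_iff_eq_empty] at hemp
    have hall : ∀ r ∈ P, F r = F pc := by
      intro r hr
      by_contra hFr
      have h1 : K pc = K r := by
        by_contra hKne
        have hmem : (-(F pc - F r) / (K pc - K r)) ∈ Crit := by
          refine ⟨pc, hpc, r, hr, fun e => hFr e.symm, hKne, ?_⟩
          have hK0 : K pc - K r ≠ 0 := sub_ne_zero.mpr hKne
          field_simp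
          ring
        rw [hemp] at hmem
        exact hmem
      have h2 : K qc = K r := by
        by_contra hKne
        have hFq : F qc ≠ F r := by
          rw [← heqcF]
          exact fun e => hFr e.symm
        have hmem : (-(F qc - F r) / (K qc - K r)) ∈ Crit := by
          refine ⟨qc, hqc, r, hr, hFq, hKne, ?_⟩
          have hK0 : K qc - K r ≠ 0 := sub_ne_zero.mpr hKne
          field_simp
          ring
        rw [hemp] at hmem
        exact hmem
      exact hpqc (hΔ pc qc heqcF (by rw [h1, h2]))
    refine hnc ⟨w.1, w.2, F pc, hw1, ?_⟩
    intro p hp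
    have h9 : w.1 * p.1 + w.2 * p.2 = F p := by rw [hFdef]
    rw [h9]
    exact hall p hp
  obtain ⟨c₁, hc₁Crit, hc₁min⟩ : ∃ c ∈ Crit, ∀ c' ∈ Crit, |c| ≤ |c'| := by
    have hne : hCritfin.toFinset.Nonempty := by
      rwa [Set.Finite.toFinset_nonempty]
    obtain ⟨c, hcmem, hcmin⟩ := Finset.exists_min_image hCritfin.toFinset (fun c => |c|) hne
    exact ⟨c, (Set.Finite.mem_toFinset _).mp hcmem,
      fun c' hc' => hcmin c' ((Set.Finite.mem_toFinset _).mpr hc')⟩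
  have hc₁0 : c₁ ≠ 0 := fun e => hCrit0 (e ▸ hc₁Crit)
  -- master inequality
  have hMaster : ∀ p ∈ P, ∀ q ∈ P, F p ≠ F q → |c₁| * |K p - K q| ≤ |F p - F q| := by
    intro p hp q hq hFne
    by_cases hKe : K p = K q
    · rw [hKe, sub_self, abs_zero, mul_zero]
      exact abs_nonneg _
    · have hK0 : K p - K q ≠ 0 := sub_ne_zero.mpr hKe
      have hc₀Crit : (-(F p - F q) / (K p - K q)) ∈ Crit := by
        refine ⟨p, hp, q, hq, hFne, hKe, ?_⟩
        field_simp
        ring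
      have hle := hc₁min _ hc₀Crit
      have habs2 : |(-(F p - F q) / (K p - K q))| = |F p - F q| / |K p - K q| := by
        rw [abs_div, abs_neg]
      rw [habs2] at hle
      have hKpos : 0 < |K p - K q| := abs_pos.mpr hK0
      calc |c₁| * |K p - K q| ≤ (|F p - F q| / |K p - K q|) * |K p - K q| :=
            mul_le_mul_of_nonneg_right hle hKpos.le
        _ = |F p - F q| := by field_simp
  -- the perturbed functionals
  obtain ⟨gm, hgmdef⟩ : ∃ gm : ℝ × ℝ → ℝ, gm = fun p => F p + (c₁ / 2) * K p := ⟨_, rfl⟩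
  obtain ⟨hm, hhmdef⟩ : ∃ hm : ℝ × ℝ → ℝ, hm = fun p => F p + c₁ * K p := ⟨_, rfl⟩
  have hgmval : ∀ p : ℝ × ℝ, gm p = F p + (c₁ / 2) * K p := fun p => by rw [hgmdef]
  have hhmval : ∀ p : ℝ × ℝ, hm p = F p + c₁ * K p := fun p => by rw [hhmdef]
  -- injectivity of gm on P
  have hginj : ∀ p ∈ P, ∀ q ∈ P, gm p = gm q → p = q := by
    intro p hp q hq he
    have he' : (F p - F q) + (c₁ / 2) * (K p - K q) = 0 := by
      rw [hgmval, hgmval] at he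
      linarith
    by_cases hKe : K p = K q
    · have hFe : F p = F q := by
        rw [hKe, sub_self, mul_zero, add_zero, sub_eq_zero] at he'
        exact he'
      exact hΔ p q hFe hKe
    · have hK0 : K p - K q ≠ 0 := sub_ne_zero.mpr hKe
      by_cases hFe : F p = F q
      · exfalso
        rw [hFe, sub_self, zero_add, mul_eq_zero] at he'
        rcases he' with h | h
        · exact hc₁0 (by linarith)
        · exact hK0 h
      · exfalso
        have hM := hMaster p hp q hq hFe
        have h1 : |F p - F q| = (|c₁| / 2) * |K p - K q| := by
          have hx : F p - F q = -((c₁ / 2) * (K p - K q)) := by linarith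
          rw [hx, abs_neg, abs_mul, abs_div, abs_two]
        have hKpos : 0 < |K p - K q| := abs_pos.mpr hK0
        have hcpos : 0 < |c₁| := abs_pos.mpr hc₁0
        rw [h1] at hM
        nlinarith [mul_pos hcpos hKpos]
  -- order compatibility of F with gm
  have hdcomp : ∀ p ∈ P, ∀ q ∈ P, F p < F q → gm p < gm q := by
    intro p hp q hq hlt
    have hM := hMaster q hq p hp (ne_of_gt hlt)
    have h1 : |F q - F p| = F q - F p := abs_of_pos (by linarith)
    rw [h1] at hM
    have h2 : |(c₁ / 2) * (K q - K p)| = (|c₁| * |K q - K p|) / 2 := by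
      rw [abs_mul, abs_div, abs_two]; ring
    have h3 := neg_abs_le ((c₁ / 2) * (K q - K p))
    have h4 : gm q - gm p = (F q - F p) + (c₁ / 2) * (K q - K p) := by
      rw [hgmval, hgmval]; ring
    linarith
  -- order compatibility of hm with gm
  have hecomp : ∀ p ∈ P, ∀ q ∈ P, hm p < hm q → gm p < gm q := by
    intro p hp q hq hlt
    have hB : (F q - F p) + c₁ * (K q - K p) > 0 := by
      rw [hhmval, hhmval] at hlt; linarith
    have hgdiff : gm q - gm p = (F q - F p) + (c₁ / 2) * (K q - K p) := by
      rw [hgmval, hgmval]; ring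
    by_cases hKe : K q = K p
    · have hs : K q - K p = 0 := by rw [hKe, sub_self]
      rw [hs, mul_zero, add_zero] at hB hgdiff
      linarith
    · by_cases hFe : F q = F p
      · rw [hFe, sub_self, zero_add] at hB
        have hhalf : (c₁ / 2) * (K q - K p) = (c₁ * (K q - K p)) / 2 := by ring
        rw [hFe, sub_self, zero_add, hhalf] at hgdiff
        linarith
      · have hM := hMaster q hq p hp hFe
        have h3 := neg_abs_le (c₁ * (K q - K p))
        have h4 := le_abs_self (c₁ * (K q - K p))
        have h5 : |c₁ * (K q - K p)| = |c₁| * |K q - K p| := abs_mul _ _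
        have hd0 : 0 < F q - F p := by
          rcases lt_trichotomy (F q - F p) 0 with hneg | hzero | hpos
          · exfalso
            have h6 : |F q - F p| = -(F q - F p) := abs_of_neg hneg
            rw [h6] at hM
            linarith
          · exact absurd (sub_eq_zero.mp hzero) hFe
          · exact hpos
        have h6 : |F q - F p| = F q - F p := abs_of_pos hd0
        have h7 := neg_abs_le ((c₁ / 2) * (K q - K p))
        have h8 : |(c₁ / 2) * (K q - K p)| = (|c₁| * |K q - K p|) / 2 := by
          rw [abs_mul, abs_div, abs_two]; ring
        rw [h6] at hM
        linarith
  -- same hm-value forces distinct F-values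
  have hccomp : ∀ p ∈ P, ∀ q ∈ P, p ≠ q → hm p = hm q → F p ≠ F q := by
    intro p hp q hq hne he hFe
    have he' : (F p - F q) + c₁ * (K p - K q) = 0 := by
      rw [hhmval, hhmval] at he; linarith
    rw [hFe, sub_self, zero_add, mul_eq_zero] at he'
    rcases he' with h | h
    · exact hc₁0 h
    · exact hne (hΔ p q hFe (sub_eq_zero.mp h))
  -- the direction associated with c₁ is admissible
  obtain ⟨pd, hpd, qd, hqd, hFd, hKd, heqd⟩ := hc₁Crit
  have hpdqd : pd ≠ qd := fun e => hFd (by rw [e])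
  have hhm_eq : hm pd = hm qd := by
    rw [hhmval, hhmval]
    linarith
  obtain ⟨w', hw'def⟩ : ∃ w' : ℝ × ℝ, w' = (w.1 - c₁ * w.2, w.2 + c₁ * w.1) := ⟨_, rfl⟩
  have hw'1 : w'.1 = w.1 - c₁ * w.2 := by rw [hw'def]
  have hw'2 : w'.2 = w.2 + c₁ * w.1 := by rw [hw'def]
  have hm_form : ∀ p : ℝ × ℝ, hm p = w'.1 * p.1 + w'.2 * p.2 := by
    intro p
    rw [hhmval]
    simp only [hFdef, hKdef, hw'1, hw'2]
    ring
  have hw'0 : w' ≠ 0 := by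
    intro h0
    have h1 : w.1 - c₁ * w.2 = 0 := by rw [← hw'1, h0]; rfl
    have h2 : w.2 + c₁ * w.1 = 0 := by rw [← hw'2, h0]; rfl
    have hpos : (0:ℝ) < 1 + c₁ ^ 2 := by positivity
    apply hw0
    have hx1 : w.1 * (1 + c₁ ^ 2) = 0 := by linear_combination h1 + c₁ * h2
    have hy1 : w.2 * (1 + c₁ ^ 2) = 0 := by linear_combination h2 - c₁ * h1
    have hx : w.1 = 0 := by
      rcases mul_eq_zero.mp hx1 with h | h
      · exact h
      · linarith
    have hy : w.2 = 0 := by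
      rcases mul_eq_zero.mp hy1 with h | h
      · exact h
      · linarith
    exact Prod.ext hx hy
  have ht₁A : ((fun p : ℝ × ℝ => w'.1 * p.1 + w'.2 * p.2) '' P).ncard ∈ A := by
    refine ⟨w', hw'0, ⟨pd, hpd, qd, hqd, hpdqd, ?_⟩, rfl⟩
    rw [← hm_form, ← hm_form]
    exact hhm_eq
  have ht₁T : ((fun p : ℝ × ℝ => w'.1 * p.1 + w'.2 * p.2) '' P).ncard ≤ T :=
    le_csSup hAbdd ht₁A
  have himg_hm : hm '' P = (fun p : ℝ × ℝ => w'.1 * p.1 + w'.2 * p.2) '' P := by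
    apply Set.image_congr
    intro p _
    exact hm_form p
  -- apply the abstract counting lemma
  have hQne : hfin.toFinset.Nonempty := ⟨pa, (Set.Finite.mem_toFinset _).mpr hpa⟩
  have hmem : ∀ {p : ℝ × ℝ}, p ∈ hfin.toFinset ↔ p ∈ P := Set.Finite.mem_toFinset _
  have hcount := abstract_count hfin.toFinset F gm hm hQne
    (fun p hp q hq => hginj p (hmem.mp hp) q (hmem.mp hq))
    (fun p hp q hq => hccomp p (hmem.mp hp) q (hmem.mp hq))
    (fun p hp q hq => hdcomp p (hmem.mp hp) q (hmem.mp hq))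
    (fun p hp q hq => hecomp p (hmem.mp hp) q (hmem.mp hq))
  rw [← himgcard hm, ← himgcard F, ← hPcard] at hcount
  -- conclude
  have ht₁ : (hm '' P).ncard ≤ T := by
    rw [himg_hm]
    exact ht₁T
  have hfinal : P.ncard + 1 ≤ 2 * T := by
    rw [← hTcard] at hcount
    omega
  refine ⟨w.1, w.2, ?_, ?_⟩
  · rw [← hFdef]
    calc (P.ncard + 1) / 2 ≤ (2 * T) / 2 := Nat.div_le_div_right hfinal
      _ = T := by omega
      _ = (F '' P).ncard := hTcard
  · rw [← hFdef, ← hTcard]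
    exact hTle

theorem stmt_18 (x y : ℕ → ℝ) (n k : ℕ)
    (S : Fin n → Set ℕ) (ξ : Fin n → ℝ)
    (hSinf : ∀ i, (S i).Infinite) (hSdisj : Pairwise (fun i j => Disjoint (S i) (S j)))
    (hScov : (⋃ i, S i) = Set.univ) (hξ : Function.Injective ξ)
    (hxrep : Tendsto (fun l => x l - ∑ i, (S i).indicator (fun _ => ξ i) l) atTop (𝓝 0))
    (T : Fin k → Set ℕ) (η : Fin k → ℝ)
    (hTinf : ∀ j, (T j).Infinite) (hTdisj : Pairwise (fun i j => Disjoint (T i) (T j)))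
    (hTcov : (⋃ j, T j) = Set.univ) (hη : Function.Injective η)
    (hyrep : Tendsto (fun l => y l - ∑ j, (T j).indicator (fun _ => η j) l) atTop (𝓝 0))
    (E : Set (Fin n × Fin k)) (hE : E = {p | (S p.1 ∩ T p.2).Infinite})
    (hnc : ¬ ∃ a b c : ℝ, (a ≠ 0 ∨ b ≠ 0) ∧ ∀ p ∈ E, a * ξ p.1 + b * η p.2 = c) :
    ∃ z ∈ Submodule.span ℝ ({x, y} : Set (ℕ → ℝ)),
      (AccPts z).Finite ∧ (E.ncard + 1) / 2 ≤ (AccPts z).ncard ∧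
        (AccPts z).ncard ≤ E.ncard - 1 := by
  classical
  -- the point set in the plane
  set e : Fin n × Fin k → ℝ × ℝ := fun p => (ξ p.1, η p.2) with he_def
  have he_inj : Function.Injective e := by
    intro p q h
    have h1 : ξ p.1 = ξ q.1 := congrArg Prod.fst h
    have h2 : η p.2 = η q.2 := congrArg Prod.snd h
    exact Prod.ext (hξ h1) (hη h2)
  set Pts : Set (ℝ × ℝ) := e '' E with hPts_def
  have hPtsfin : Pts.Finite := (Set.toFinite E).image e
  have hPtsnc : ¬ ∃ a b c : ℝ, (a ≠ 0 ∨ b ≠ 0) ∧ ∀ p ∈ Pts, a * p.1 + b * p.2 = c := by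
    rintro ⟨a, b, c, hab, hall⟩
    exact hnc ⟨a, b, c, hab, fun p hp => hall (e p) ⟨p, hp, rfl⟩⟩
  have hcardPts : Pts.ncard = E.ncard := Set.ncard_image_of_injective E he_inj
  obtain ⟨a, b, hlow, hhigh⟩ := key_geom Pts hPtsfin hPtsnc
  -- the sequence z
  refine ⟨a • x + b • y, Submodule.mem_span_pair.mpr ⟨a, b, rfl⟩, ?_⟩
  set z : ℕ → ℝ := a • x + b • y with hz_def
  have hz_apply : ∀ l, z l = a * x l + b * y l := by
    intro l; simp [hz_def, smul_eq_mul]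
  set c : Fin n × Fin k → ℝ := fun p => a * ξ p.1 + b * η p.2 with hc_def
  -- choose the unique indices
  have hIex : ∀ l : ℕ, ∃ i, l ∈ S i := by
    intro l
    have : l ∈ ⋃ i, S i := hScov ▸ Set.mem_univ l
    simpa using this
  have hJex : ∀ l : ℕ, ∃ j, l ∈ T j := by
    intro l
    have : l ∈ ⋃ j, T j := hTcov ▸ Set.mem_univ l
    simpa using this
  choose I hI using hIex
  choose J hJ using hJex
  have hIuniq : ∀ l i, l ∈ S i → I l = i := by
    intro l i hl
    by_contra hne
    exact Set.disjoint_left.mp (hSdisj hne) (hI l) hl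
  have hJuniq : ∀ l j, l ∈ T j → J l = j := by
    intro l j hl
    by_contra hne
    exact Set.disjoint_left.mp (hTdisj hne) (hJ l) hl
  -- collapse of the indicator sums
  have hsumS : ∀ l, (∑ i, (S i).indicator (fun _ => ξ i) l) = ξ (I l) := by
    intro l
    rw [Finset.sum_eq_single_of_mem (I l) (Finset.mem_univ _)]
    · exact Set.indicator_of_mem (hI l) _
    · intro i _ hne
      apply Set.indicator_of_notMem
      intro hl
      exact absurd (hIuniq l i hl) (fun h => hne h.symm)
  have hsumT : ∀ l, (∑ j, (T j).indicator (fun _ => η j) l) = η (J l) := by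
    intro l
    rw [Finset.sum_eq_single_of_mem (J l) (Finset.mem_univ _)]
    · exact Set.indicator_of_mem (hJ l) _
    · intro j _ hne
      apply Set.indicator_of_notMem
      intro hl
      exact absurd (hJuniq l j hl) (by intro h; exact hne h.symm)
  set w : ℕ → ℝ := fun l => c (I l, J l) with hw_def
  have hzw : Tendsto (fun l => z l - w l) atTop (𝓝 0) := by
    have h1 : Tendsto (fun l =>
        a * (x l - ∑ i, (S i).indicator (fun _ => ξ i) l) +
        b * (y l - ∑ j, (T j).indicator (fun _ => η j) l)) atTop (𝓝 (a * 0 + b * 0)) :=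
      (hxrep.const_mul a).add (hyrep.const_mul b)
    have h2 : (fun l => z l - w l) = fun l =>
        a * (x l - ∑ i, (S i).indicator (fun _ => ξ i) l) +
        b * (y l - ∑ j, (T j).indicator (fun _ => η j) l) := by
      funext l
      rw [hsumS l, hsumT l, hz_apply l]
      simp [hw_def, hc_def]
      ring
    rw [h2]
    simpa using h1
  -- the two inclusions
  have hsub1 : c '' E ⊆ AccPts z := by
    rintro v ⟨p, hp, rfl⟩
    intro ε hε
    have hInf : (S p.1 ∩ T p.2).Infinite := by
      rw [hE] at hp; exact hp
    obtain ⟨N, hN⟩ := Metric.tendsto_atTop.mp hzw ε hε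
    have hsub : (S p.1 ∩ T p.2) \ {l | l < N} ⊆ {l : ℕ | |z l - c p| < ε} := by
      rintro l ⟨⟨hlS, hlT⟩, hlN⟩
      have hIl : I l = p.1 := hIuniq l p.1 hlS
      have hJl : J l = p.2 := hJuniq l p.2 hlT
      have hNl : N ≤ l := not_lt.mp hlN
      have := hN l hNl
      rw [Real.dist_eq, sub_zero] at this
      have hwl : w l = c p := by
        simp only [hw_def]
        rw [hIl, hJl]
      simp only [Set.mem_setOf_eq]
      calc |z l - c p| = |z l - w l| := by rw [hwl]
        _ < ε := this
    exact ((hInf.diff (Set.finite_lt_nat N)).mono hsub)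
  have hEne : E.Nonempty := by
    have i := I 0
    have hSi : (S i).Infinite := hSinf i
    have hSi2 : S i = ⋃ j, S i ∩ T j := by
      rw [← Set.inter_iUnion, hTcov, Set.inter_univ]
    by_contra hne
    rw [Set.not_nonempty_iff_eq_empty] at hne
    have hfin : (⋃ j, S i ∩ T j).Finite := by
      apply Set.finite_iUnion
      intro j
      have : (i, j) ∉ E := by rw [hne]; exact Set.notMem_empty _
      rw [hE] at this
      exact Set.not_infinite.mp this
    rw [← hSi2] at hfin
    exact hSi hfin
  have hBfin : {l : ℕ | (I l, J l) ∉ E}.Finite := by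
    have hsub : {l : ℕ | (I l, J l) ∉ E} ⊆
        ⋃ p ∈ {p : Fin n × Fin k | p ∉ E}, (S p.1 ∩ T p.2) := by
      intro l hl
      exact Set.mem_biUnion hl ⟨hI l, hJ l⟩
    apply Set.Finite.subset _ hsub
    apply Set.Finite.biUnion (Set.toFinite _)
    intro p hp
    have : p ∉ E := hp
    rw [hE] at this
    exact Set.not_infinite.mp this
  have hsub2 : AccPts z ⊆ c '' E := by
    intro u hu
    by_contra hnotin
    -- minimum distance
    have hEfin : E.Finite := Set.toFinite E
    set Et : Finset (Fin n × Fin k) := hEfin.toFinset with hEt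
    have hEtne : Et.Nonempty := by
      rw [hEt, Set.Finite.toFinset_nonempty]; exact hEne
    set δ : ℝ := Et.inf' hEtne (fun p => |c p - u|) with hδ
    have hδpos : 0 < δ := by
      rw [hδ, Finset.lt_inf'_iff]
      intro p hp
      rw [abs_pos, sub_ne_zero]
      intro hcu
      exact hnotin ⟨p, by rwa [hEt, Set.Finite.mem_toFinset] at hp, hcu⟩
    have hδle : ∀ p ∈ E, δ ≤ |c p - u| := by
      intro p hp
      rw [hδ]
      exact Finset.inf'_le _ (by rwa [hEt, Set.Finite.mem_toFinset])
    obtain ⟨N, hN⟩ := Metric.tendsto_atTop.mp hzw (δ / 2) (by linarith)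
    have hinf := hu (δ / 2) (by linarith)
    have hsub : {l : ℕ | |z l - u| < δ / 2} ⊆
        {l : ℕ | (I l, J l) ∉ E} ∪ {l | l < N} := by
      intro l hl
      simp only [Set.mem_setOf_eq] at hl
      by_contra hcon
      rw [Set.mem_union] at hcon
      push_neg at hcon
      obtain ⟨hlE, hlN⟩ := hcon
      simp only [Set.mem_setOf_eq, not_not, not_lt] at hlE hlN
      have hdist := hN l hlN
      rw [Real.dist_eq, sub_zero] at hdist
      have hwu : δ ≤ |w l - u| := hδle _ hlE
      have : |w l - u| ≤ |z l - w l| + |z l - u| := by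
        have := abs_sub (z l - u) (z l - w l)
        calc |w l - u| = |(z l - u) - (z l - w l)| := by ring_nf
          _ ≤ |z l - u| + |z l - w l| := abs_sub _ _
          _ = |z l - w l| + |z l - u| := by ring
      linarith
    exact (Set.Finite.subset (hBfin.union (Set.finite_lt_nat N)) hsub).not_infinite hinf
  have hAcc : AccPts z = c '' E := Set.Subset.antisymm hsub2 hsub1
  have himg : (fun q : ℝ × ℝ => a * q.1 + b * q.2) '' Pts = c '' E := by
    rw [hPts_def, Set.image_image]
  rw [hAcc, ← himg, ← hcardPts]
  exact ⟨hPtsfin.image _, hlow, hhigh⟩
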